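/- Let k be a field of characteristic p, let Ū ≠ Ū' be the unipotent radicals of two opposite Borel subgroups of SL₂(F_p) (or PSL₂(F_p)), and let W be a k[SL₂(F_p)]-module generated by its Ū'-invariants W^{Ū'}. Then W is generated by W^{Ū'} already as a k[Ū]-module. -/

import Mathlib

/-- The upper unipotent element `(1 a; 0 1)` of `SL₂(F_p)`. -/
def upEl (p : ℕ) (a : ZMod p) : Matrix.SpecialLinearGroup (Fin 2) (ZMod p) :=
  ⟨!![1, a; 0, 1], by norm_num [Matrix.det_fin_two_of]⟩

/-- The lower unipotent element `(1 0; a 1)` of `SL₂(F_p)`. -/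
def lowEl (p : ℕ) (a : ZMod p) : Matrix.SpecialLinearGroup (Fin 2) (ZMod p) :=
  ⟨!![1, 0; a, 1], by norm_num [Matrix.det_fin_two_of]⟩

section aux

variable {p : ℕ} [Fact p.Prime]

/-- A lower triangular element of `SL₂`. -/
def lowTri (c d : ZMod p) (hd : d ≠ 0) : Matrix.SpecialLinearGroup (Fin 2) (ZMod p) :=
  ⟨!![d⁻¹, 0; c, d], by rw [Matrix.det_fin_two_of]; field_simp; ring⟩

/-- An antidiagonal element of `SL₂`. -/
def wEl (c : ZMod p) (hc : c ≠ 0) : Matrix.SpecialLinearGroup (Fin 2) (ZMod p) :=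
  ⟨!![0, -c⁻¹; c, 0], by rw [Matrix.det_fin_two_of]; field_simp; ring⟩

lemma upEl_mul_upEl (x y : ZMod p) : upEl p x * upEl p y = upEl p (x + y) := by
  apply Subtype.ext
  show (!![1, x; 0, 1] : Matrix (Fin 2) (Fin 2) (ZMod p)) * !![1, y; 0, 1] = _
  rw [Matrix.mul_fin_two]
  norm_num [upEl, add_comm]

lemma upEl_zero : upEl p 0 = 1 := by
  apply Subtype.ext
  show (!![1, (0:ZMod p); 0, 1]) = _
  simp [Matrix.one_fin_two]

lemma lowEl_mul_lowTri (β c d : ZMod p) (hd : d ≠ 0) :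
    lowEl p β * lowTri c d hd = lowTri c d hd * lowEl p (β * d⁻¹ * d⁻¹) := by
  apply Subtype.ext
  show (!![1, 0; β, 1] : Matrix (Fin 2) (Fin 2) (ZMod p)) * !![d⁻¹, 0; c, d]
    = !![d⁻¹, 0; c, d] * !![1, 0; β * d⁻¹ * d⁻¹, 1]
  rw [Matrix.mul_fin_two, Matrix.mul_fin_two]
  ext i j
  fin_cases i <;> fin_cases j <;> simp [Matrix.vecHead, Matrix.vecTail] <;> field_simp <;> ring

lemma lowEl_mul_wEl (β c : ZMod p) (hc : c ≠ 0) :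
    lowEl p β * wEl c hc = wEl c hc * upEl p (-(β * c⁻¹ * c⁻¹)) := by
  apply Subtype.ext
  show (!![1, 0; β, 1] : Matrix (Fin 2) (Fin 2) (ZMod p)) * !![0, -c⁻¹; c, 0]
    = !![0, -c⁻¹; c, 0] * !![1, -(β * c⁻¹ * c⁻¹); 0, 1]
  rw [Matrix.mul_fin_two, Matrix.mul_fin_two]
  ext i j
  fin_cases i <;> fin_cases j <;> simp [Matrix.vecHead, Matrix.vecTail] <;> field_simp <;> ring

lemma wEl_mul_upEl_entry (y c : ZMod p) (hc : c ≠ 0) :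
    ((wEl c hc * upEl p y) : Matrix.SpecialLinearGroup (Fin 2) (ZMod p)).1 1 1 = c * y := by
  show ((!![0, -c⁻¹; c, 0] : Matrix (Fin 2) (Fin 2) (ZMod p)) * !![1, y; 0, 1]) 1 1 = c * y
  rw [Matrix.mul_fin_two]
  simp

variable {k : Type*} [Field k] [CharP k p]
    {W : Type*} [AddCommGroup W] [Module k W]
    [DistribMulAction (Matrix.SpecialLinearGroup (Fin 2) (ZMod p)) W]
    [SMulCommClass (Matrix.SpecialLinearGroup (Fin 2) (ZMod p)) k W]

/-- Case `d ≠ 0`: the element `g • s` is itself of the form `upEl a • t` with `t` fixed. -/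
lemma bigCell_mem (g : Matrix.SpecialLinearGroup (Fin 2) (ZMod p)) (hd : g.1 1 1 ≠ 0)
    (s : W) (hs : ∀ b : ZMod p, lowEl p b • s = s) :
    ∃ (a : ZMod p) (t : W), (∀ b : ZMod p, lowEl p b • t = t) ∧ g • s = upEl p a • t := by
  set a := g.1 0 0 with ha
  set b := g.1 0 1 with hb
  set c := g.1 1 0 with hc
  set d := g.1 1 1 with hdd
  have hdet : a * d - b * c = 1 := by
    have := g.2
    rwa [Matrix.det_fin_two] at this
  refine ⟨b * d⁻¹, lowTri c d hd • s, ?_, ?_⟩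
  · intro β
    rw [← mul_smul, lowEl_mul_lowTri, mul_smul, hs]
  · rw [← mul_smul]
    congr 1
    apply Subtype.ext
    rw [Matrix.SpecialLinearGroup.coe_mul]
    show (g : Matrix (Fin 2) (Fin 2) (ZMod p)) = !![1, b * d⁻¹; 0, 1] * !![d⁻¹, 0; c, d]
    rw [Matrix.eta_fin_two (g : Matrix (Fin 2) (Fin 2) (ZMod p)), Matrix.mul_fin_two]
    rw [← ha, ← hb, ← hc, ← hdd]
    ext i j
    fin_cases i <;> fin_cases j <;> simp [Matrix.vecHead, Matrix.vecTail] <;> field_simp <;> linear_combination hdet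

lemma span_stable (x : ZMod p) {w : W}
    (hw : w ∈ Submodule.span k {x : W | ∃ (a : ZMod p) (s : W),
        (∀ b : ZMod p, lowEl p b • s = s) ∧ x = upEl p a • s}) :
    upEl p x • w ∈ Submodule.span k {x : W | ∃ (a : ZMod p) (s : W),
        (∀ b : ZMod p, lowEl p b • s = s) ∧ x = upEl p a • s} := by
  induction hw using Submodule.span_induction with
  | mem y hy =>
    obtain ⟨a, s, hs, rfl⟩ := hy
    rw [← mul_smul, upEl_mul_upEl]
    exact Submodule.subset_span ⟨x + a, s, hs, rfl⟩
  | zero => rw [smul_zero]; exact Submodule.zero_mem _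
  | add y z _ _ hy hz => rw [smul_add]; exact Submodule.add_mem _ hy hz
  | smul c y _ hy => rw [smul_comm]; exact Submodule.smul_mem _ c hy

lemma smul_mem_span (g : Matrix.SpecialLinearGroup (Fin 2) (ZMod p))
    (s : W) (hs : ∀ b : ZMod p, lowEl p b • s = s) :
    g • s ∈ Submodule.span k {x : W | ∃ (a : ZMod p) (s : W),
        (∀ b : ZMod p, lowEl p b • s = s) ∧ x = upEl p a • s} := by
  by_cases hd : g.1 1 1 ≠ 0
  · obtain ⟨a, t, ht, he⟩ := bigCell_mem g hd s hs
    exact he ▸ Submodule.subset_span ⟨a, t, ht, rfl⟩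
  push_neg at hd
  set a := g.1 0 0 with ha
  set b := g.1 0 1 with hb
  set c := g.1 1 0 with hc
  have hdet : a * g.1 1 1 - b * c = 1 := by
    have := g.2
    rwa [Matrix.det_fin_two] at this
  rw [hd, mul_zero, zero_sub] at hdet
  have hcne : c ≠ 0 := by
    intro h
    rw [h, mul_zero, neg_zero] at hdet
    exact zero_ne_one hdet
  -- the Ū-average of s
  set v : W := ∑ y : ZMod p, upEl p y • s with hv_def
  have hv : ∀ x : ZMod p, upEl p x • v = v := by
    intro x
    rw [hv_def, Finset.smul_sum]
    simp_rw [← mul_smul, upEl_mul_upEl]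
    exact Fintype.sum_equiv (Equiv.addLeft x) _ _ (fun y => rfl)
  have hwv_fixed : ∀ β : ZMod p, lowEl p β • (wEl c hcne • v) = wEl c hcne • v := by
    intro β
    rw [← mul_smul, lowEl_mul_wEl, mul_smul, hv]
  -- the key decomposition of w' • s
  have hsum : wEl c hcne • v = ∑ y : ZMod p, (wEl c hcne * upEl p y) • s := by
    rw [hv_def, Finset.smul_sum]
    simp_rw [mul_smul]
  have hkey : wEl c hcne • s
      = wEl c hcne • v - ∑ y ∈ Finset.univ.erase (0 : ZMod p), (wEl c hcne * upEl p y) • s := by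
    rw [hsum, ← Finset.add_sum_erase _ _ (Finset.mem_univ (0 : ZMod p))]
    rw [upEl_zero, mul_one]
    abel
  have hws : wEl c hcne • s ∈ Submodule.span k {x : W | ∃ (a : ZMod p) (s : W),
      (∀ b : ZMod p, lowEl p b • s = s) ∧ x = upEl p a • s} := by
    rw [hkey]
    refine sub_mem (Submodule.subset_span ⟨0, wEl c hcne • v, hwv_fixed, ?_⟩)
      (Submodule.sum_mem _ fun y hy => ?_)
    · rw [upEl_zero, one_smul]
    · have hyne : y ≠ 0 := Finset.ne_of_mem_erase hy
      have hne : ((wEl c hcne * upEl p y) :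
          Matrix.SpecialLinearGroup (Fin 2) (ZMod p)).1 1 1 ≠ 0 := by
        rw [wEl_mul_upEl_entry]
        exact mul_ne_zero hcne hyne
      obtain ⟨a', t', ht', he'⟩ := bigCell_mem _ hne s hs
      exact he' ▸ Submodule.subset_span ⟨a', t', ht', rfl⟩
  have hfact : g = upEl p (a * c⁻¹) * wEl c hcne := by
    apply Subtype.ext
    rw [Matrix.SpecialLinearGroup.coe_mul]
    show (g : Matrix (Fin 2) (Fin 2) (ZMod p)) = !![1, a * c⁻¹; 0, 1] * !![0, -c⁻¹; c, 0]
    rw [Matrix.eta_fin_two (g : Matrix (Fin 2) (Fin 2) (ZMod p)), Matrix.mul_fin_two]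
    rw [← ha, ← hb, ← hc, hd]
    ext i j
    fin_cases i <;> fin_cases j <;> simp [Matrix.vecHead, Matrix.vecTail] <;> field_simp <;>
      first
      | linear_combination hdet
      | linear_combination -hdet
      | linear_combination c * hdet
      | linear_combination -c * hdet
  rw [hfact, mul_smul]
  exact span_stable _ hws

end aux

/-- If a `k[SL₂(F_p)]`-module `W` is generated by its invariants under the lower unipotent
subgroup `Ū'`, then it is generated by these invariants already as a module over the
opposite (upper) unipotent subgroup `Ū`. -/
theorem stmt6 (p : ℕ) [Fact p.Prime] (k : Type*) [Field k] [CharP k p]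
    (W : Type*) [AddCommGroup W] [Module k W]
    [DistribMulAction (Matrix.SpecialLinearGroup (Fin 2) (ZMod p)) W]
    [SMulCommClass (Matrix.SpecialLinearGroup (Fin 2) (ZMod p)) k W]
    (hgen : Submodule.span k
      {x : W | ∃ (g : Matrix.SpecialLinearGroup (Fin 2) (ZMod p)) (s : W),
        (∀ a : ZMod p, lowEl p a • s = s) ∧ x = g • s} = ⊤) :
    Submodule.span k
      {x : W | ∃ (a : ZMod p) (s : W),
        (∀ b : ZMod p, lowEl p b • s = s) ∧ x = upEl p a • s} = ⊤ := by
  refine eq_top_iff.mpr ?_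
  rw [← hgen]
  refine Submodule.span_le.mpr ?_
  rintro x ⟨g, s, hs, rfl⟩
  exact smul_mem_span g s hs
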